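/- Let n ≥ 2. Define norms on M_n by ‖A‖_{γ,β} = max{2·ℓ₂(Ax) : ℓ₂(x) = 1} and ‖A‖_{α,β} = max{2·ℓ₂(Ax) : ℓ_∞(x) = 1}. Then ‖A‖_{γ,β} ≤ ‖A‖_{α,β} for every A ∈ M_n, but there exists A ∈ M_n with ‖A‖_{γ,β} < ‖A‖_{α,β}. In particular, the generalized induced norm ‖·‖_{α,β} is not a minimal norm on M_n. -/

import Mathlib

open Matrix

/-- `ν` is a norm on `ℂⁿ`. -/
def IsNormCn {n : ℕ} (ν : (Fin n → ℂ) → ℝ) : Prop :=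
  (∀ x, ν x = 0 ↔ x = 0) ∧
  (∀ (c : ℂ) (x), ν (c • x) = ‖c‖ * ν x) ∧
  (∀ x y, ν (x + y) ≤ ν x + ν y)

/-- `N` is a norm on the n×n complex matrices. -/
def IsNormMn {n : ℕ} (N : Matrix (Fin n) (Fin n) ℂ → ℝ) : Prop :=
  (∀ A, N A = 0 ↔ A = 0) ∧
  (∀ (c : ℂ) (A), N (c • A) = ‖c‖ * N A) ∧
  (∀ A B, N (A + B) ≤ N A + N B)

/-- `N` is a minimal norm on `M_n`: any norm dominated by `N` equals `N`. -/
def IsMinimalNorm {n : ℕ} (N : Matrix (Fin n) (Fin n) ℂ → ℝ) : Prop :=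
  ∀ N' : Matrix (Fin n) (Fin n) ℂ → ℝ,
    IsNormMn N' → (∀ A, N' A ≤ N A) → ∀ A, N' A = N A

/-- The generalized induced norm `‖A‖_{1,2} = max{‖Ax‖₂ : ‖x‖₁ = 1}`. -/
noncomputable def gind {n : ℕ} (ν₁ ν₂ : (Fin n → ℂ) → ℝ)
    (A : Matrix (Fin n) (Fin n) ℂ) : ℝ :=
  sSup {r : ℝ | ∃ x : Fin n → ℂ, ν₁ x = 1 ∧ r = ν₂ (A.mulVec x)}

/-- `C_x`: the matrix all of whose columns equal `x`, i.e. `y ↦ (∑ j, y j) • x`. -/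
def Cmat {n : ℕ} (x : Fin n → ℂ) : Matrix (Fin n) (Fin n) ℂ :=
  Matrix.of fun i _ => x i


section Aux
variable {n : ℕ}

noncomputable def l2 {n : ℕ} (x : Fin n → ℂ) : ℝ := Real.sqrt (∑ i, ‖x i‖ ^ 2)

lemma l2_eq_norm (x : Fin n → ℂ) :
    l2 x = ‖(WithLp.equiv 2 (Fin n → ℂ)).symm x‖ := by
  rw [EuclideanSpace.norm_eq]; rfl

lemma l2_mulVec (A : Matrix (Fin n) (Fin n) ℂ) (x : Fin n → ℂ) :
    l2 (A.mulVec x) =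
      ‖(toEuclideanCLM (𝕜 := ℂ) A) ((WithLp.equiv 2 (Fin n → ℂ)).symm x)‖ := by
  exact l2_eq_norm (A *ᵥ x)

lemma sphere_sSup_eq (hn : 0 < n)
    (f : EuclideanSpace ℂ (Fin n) →L[ℂ] EuclideanSpace ℂ (Fin n)) :
    sSup {r : ℝ | ∃ x : EuclideanSpace ℂ (Fin n), ‖x‖ = 1 ∧ r = 2 * ‖f x‖} = 2 * ‖f‖ := by
  set S : Set ℝ := {r : ℝ | ∃ x : EuclideanSpace ℂ (Fin n), ‖x‖ = 1 ∧ r = 2 * ‖f x‖} with hS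
  have x₀ : EuclideanSpace ℂ (Fin n) := EuclideanSpace.single ⟨0, hn⟩ (1 : ℂ)
  have hx₀ : ‖(EuclideanSpace.single ⟨0, hn⟩ (1 : ℂ) : EuclideanSpace ℂ (Fin n))‖ = 1 := by
    simp [EuclideanSpace.norm_single]
  have hne : S.Nonempty := ⟨_, _, hx₀, rfl⟩
  have hub : ∀ r ∈ S, r ≤ 2 * ‖f‖ := by
    rintro r ⟨x, hx, rfl⟩
    have := f.unit_le_opNorm x hx.le
    linarith
  have hbdd : BddAbove S := ⟨2 * ‖f‖, hub⟩
  refine le_antisymm (csSup_le hne hub) ?_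
  have hS0 : 0 ≤ sSup S := by
    refine le_trans ?_ (le_csSup hbdd ⟨_, hx₀, rfl⟩)
    positivity
  have : ‖f‖ ≤ sSup S / 2 := by
    refine f.opNorm_le_bound (by linarith) fun x => ?_
    rcases eq_or_ne x 0 with rfl | hx
    · simp
    · have hy : ‖(‖x‖⁻¹ : ℂ) • x‖ = 1 := norm_smul_inv_norm hx
      have hmem : 2 * ‖f ((‖x‖⁻¹ : ℂ) • x)‖ ∈ S := ⟨_, hy, rfl⟩
      have hle := le_csSup hbdd hmem
      have hfy : ‖f ((‖x‖⁻¹ : ℂ) • x)‖ = ‖x‖⁻¹ * ‖f x‖ := by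
        rw [_root_.map_smul, norm_smul]
        simp
      rw [hfy] at hle
      have hxpos : (0:ℝ) < ‖x‖ := norm_pos_iff.2 hx
      rw [div_mul_eq_mul_div, le_div_iff₀ (by norm_num : (0:ℝ) < 2)]
      have h1 : 2 * (‖x‖⁻¹ * ‖f x‖) * ‖x‖ = 2 * ‖f x‖ := by
        field_simp
      nlinarith [norm_nonneg (f x), norm_nonneg x]
  linarith

lemma set2_eq (A : Matrix (Fin n) (Fin n) ℂ) :
    {r : ℝ | ∃ x : Fin n → ℂ, Real.sqrt (∑ i, ‖x i‖ ^ 2) = 1 ∧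
        r = 2 * Real.sqrt (∑ i, ‖(A.mulVec x) i‖ ^ 2)} =
    {r : ℝ | ∃ x : EuclideanSpace ℂ (Fin n), ‖x‖ = 1 ∧
        r = 2 * ‖(toEuclideanCLM (𝕜 := ℂ) A) x‖} := by
  ext r
  constructor
  · rintro ⟨x, hx, rfl⟩
    exact ⟨(WithLp.equiv 2 (Fin n → ℂ)).symm x, by rw [← l2_eq_norm]; exact hx,
      by rw [← l2_mulVec]; rfl⟩
  · rintro ⟨x, hx, rfl⟩
    refine ⟨WithLp.equiv 2 (Fin n → ℂ) x, ?_, ?_⟩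
    · have := l2_eq_norm (n := n) (WithLp.equiv 2 (Fin n → ℂ) x)
      simp only [Equiv.symm_apply_apply] at this
      rw [← this] at hx; exact hx
    · have := l2_mulVec A (WithLp.equiv 2 (Fin n → ℂ) x)
      simp only [Equiv.symm_apply_apply] at this
      rw [← this]; rfl

lemma gind2_eq_opNorm (hn : 0 < n) (A : Matrix (Fin n) (Fin n) ℂ) :
    gind (fun x => Real.sqrt (∑ i, ‖x i‖ ^ 2))
      (fun x => 2 * Real.sqrt (∑ i, ‖x i‖ ^ 2)) A = 2 * ‖toEuclideanCLM (𝕜 := ℂ) A‖ := by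
  rw [gind, set2_eq, sphere_sSup_eq hn]

lemma norm_le_linf (x : Fin n → ℂ) (i : Fin n) : ‖x i‖ ≤ ⨆ j, ‖x j‖ :=
  le_ciSup (f := fun j => ‖x j‖) (Set.Finite.bddAbove (Set.finite_range _)) i

lemma linf_le_l2 [Nonempty (Fin n)] (x : Fin n → ℂ) :
    (⨆ i, ‖x i‖) ≤ Real.sqrt (∑ i, ‖x i‖ ^ 2) := by
  refine ciSup_le fun i => ?_
  rw [Real.le_sqrt (norm_nonneg _) (by positivity)]
  exact Finset.single_le_sum (f := fun j => ‖x j‖ ^ 2) (fun j _ => by positivity)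
    (Finset.mem_univ i)

lemma l2_smul (c : ℂ) (x : Fin n → ℂ) : l2 (c • x) = ‖c‖ * l2 x := by
  unfold l2
  simp only [Pi.smul_apply, norm_smul, mul_pow]
  rw [← Finset.mul_sum, Real.sqrt_mul (by positivity), Real.sqrt_sq (norm_nonneg c)]

lemma linf_smul (c : ℂ) (x : Fin n → ℂ) :
    (⨆ i, ‖(c • x) i‖) = ‖c‖ * ⨆ i, ‖x i‖ := by
  simp only [Pi.smul_apply, norm_smul]
  exact (Real.mul_iSup_of_nonneg (norm_nonneg c) _).symm

lemma bddS (hn : 0 < n) (A : Matrix (Fin n) (Fin n) ℂ) :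
    BddAbove {r : ℝ | ∃ x : Fin n → ℂ, (⨆ i, ‖x i‖) = 1 ∧
      r = 2 * Real.sqrt (∑ i, ‖(A.mulVec x) i‖ ^ 2)} := by
  refine ⟨2 * ‖toEuclideanCLM (𝕜 := ℂ) A‖ * Real.sqrt n, ?_⟩
  rintro r ⟨x, hx, rfl⟩
  have h1 : Real.sqrt (∑ i, ‖(A.mulVec x) i‖ ^ 2) = l2 (A.mulVec x) := rfl
  have h2 : l2 (A.mulVec x) ≤ ‖toEuclideanCLM (𝕜 := ℂ) A‖ * l2 x := by
    rw [l2_mulVec, l2_eq_norm]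
    exact (toEuclideanCLM (𝕜 := ℂ) A).le_opNorm _
  have h3 : l2 x ≤ Real.sqrt n := by
    unfold l2
    refine Real.sqrt_le_sqrt ?_
    calc (∑ i, ‖x i‖ ^ 2) ≤ ∑ _i : Fin n, (1:ℝ) := by
          refine Finset.sum_le_sum fun i _ => ?_
          have hi : ‖x i‖ ≤ 1 := hx ▸ norm_le_linf x i
          nlinarith [norm_nonneg (x i)]
      _ = n := by simp
  have h4 : (0:ℝ) ≤ ‖toEuclideanCLM (𝕜 := ℂ) A‖ := norm_nonneg _
  rw [h1]
  nlinarith [h2, h3, (l2_mulVec A x ▸ norm_nonneg ((toEuclideanCLM (𝕜 := ℂ) A) ((WithLp.equiv 2 (Fin n → ℂ)).symm x)) : (0:ℝ) ≤ l2 (A.mulVec x))]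

lemma l2_e0 (hn : 0 < n) :
    l2 (fun i : Fin n => if i = ⟨0, hn⟩ then (1:ℂ) else 0) = 1 := by
  unfold l2
  rw [show (∑ i : Fin n, ‖(if i = ⟨0, hn⟩ then (1:ℂ) else 0)‖ ^ 2)
      = ∑ i : Fin n, (if i = ⟨0, hn⟩ then (1:ℝ) else 0) from
    Finset.sum_congr rfl fun i _ => by split <;> simp]
  simp

lemma gind_le_aux (hn : 2 ≤ n) (A : Matrix (Fin n) (Fin n) ℂ) :
    gind (fun x => Real.sqrt (∑ i, ‖x i‖ ^ 2))
      (fun x => 2 * Real.sqrt (∑ i, ‖x i‖ ^ 2)) A ≤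
    gind (fun x => ⨆ i, ‖x i‖)
      (fun x => 2 * Real.sqrt (∑ i, ‖x i‖ ^ 2)) A := by
  have hn0 : 0 < n := by omega
  have : Nonempty (Fin n) := ⟨⟨0, hn0⟩⟩
  simp only [gind]
  have hne : {r : ℝ | ∃ x : Fin n → ℂ, Real.sqrt (∑ i, ‖x i‖ ^ 2) = 1 ∧
      r = 2 * Real.sqrt (∑ i, ‖(A.mulVec x) i‖ ^ 2)}.Nonempty :=
    ⟨_, (fun i : Fin n => if i = ⟨0, hn0⟩ then (1:ℂ) else 0), l2_e0 hn0, rfl⟩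
  refine csSup_le hne ?_
  rintro r ⟨x, hx, rfl⟩
  have hxne : x ≠ 0 := by
    rintro rfl
    simp at hx
  obtain ⟨i, hi⟩ := Function.ne_iff.mp hxne
  have hm0 : 0 < ⨆ j, ‖x j‖ := lt_of_lt_of_le (norm_pos_iff.2 hi) (norm_le_linf x i)
  have hm1 : (⨆ j, ‖x j‖) ≤ 1 := le_of_le_of_eq (linf_le_l2 x) hx
  set m : ℝ := ⨆ j, ‖x j‖ with hm
  set y : Fin n → ℂ := ((m⁻¹ : ℝ) : ℂ) • x with hy
  have hcy : ‖((m⁻¹ : ℝ) : ℂ)‖ = m⁻¹ := by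
    rw [Complex.norm_real, Real.norm_eq_abs, abs_of_nonneg (by positivity)]
  have hylinf : (⨆ j, ‖y j‖) = 1 := by
    rw [hy, linf_smul, hcy, ← hm, inv_mul_cancel₀ (ne_of_gt hm0)]
  have hyval : Real.sqrt (∑ j, ‖(A.mulVec y) j‖ ^ 2)
      = m⁻¹ * Real.sqrt (∑ j, ‖(A.mulVec x) j‖ ^ 2) := by
    rw [hy, Matrix.mulVec_smul]
    have := l2_smul ((m⁻¹ : ℝ) : ℂ) (A.mulVec x)
    rw [hcy] at this
    exact this
  have hmem : 2 * Real.sqrt (∑ j, ‖(A.mulVec y) j‖ ^ 2) ∈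
      {r : ℝ | ∃ x : Fin n → ℂ, (⨆ i, ‖x i‖) = 1 ∧
        r = 2 * Real.sqrt (∑ i, ‖(A.mulVec x) i‖ ^ 2)} := ⟨y, hylinf, rfl⟩
  refine le_trans ?_ (le_csSup (bddS hn0 A) hmem)
  rw [hyval]
  have hnn : (0:ℝ) ≤ Real.sqrt (∑ j, ‖(A.mulVec x) j‖ ^ 2) := Real.sqrt_nonneg _
  have : (1:ℝ) ≤ m⁻¹ := one_le_inv_iff₀.mpr ⟨hm0, hm1⟩
  nlinarith

lemma l2_mulVec_Cmat (hn0 : 0 < n) (x : Fin n → ℂ) :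
    Real.sqrt (∑ i, ‖((Cmat (fun i : Fin n => if i = ⟨0, hn0⟩ then (1:ℂ) else 0)).mulVec x) i‖ ^ 2)
      = ‖∑ j, x j‖ := by
  have h1 : ∀ i, ((Cmat (fun i : Fin n => if i = ⟨0, hn0⟩ then (1:ℂ) else 0)).mulVec x) i
      = (if i = ⟨0, hn0⟩ then (1:ℂ) else 0) * ∑ j, x j := by
    intro i
    simp [Cmat, Matrix.mulVec, dotProduct, Finset.mul_sum]
  rw [show (∑ i, ‖((Cmat (fun i : Fin n => if i = ⟨0, hn0⟩ then (1:ℂ) else 0)).mulVec x) i‖ ^ 2)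
      = ∑ i : Fin n, (if i = ⟨0, hn0⟩ then ‖∑ j, x j‖ ^ 2 else 0) from
    Finset.sum_congr rfl fun i _ => by rw [h1]; split <;> simp]
  simp only [Finset.sum_ite_eq', Finset.mem_univ, if_true]
  exact Real.sqrt_sq (norm_nonneg _)

set_option maxHeartbeats 1000000 in
lemma gind_lt_aux (hn : 2 ≤ n) (hn0 : 0 < n) :
    gind (fun x => Real.sqrt (∑ i, ‖x i‖ ^ 2))
      (fun x => 2 * Real.sqrt (∑ i, ‖x i‖ ^ 2))
      (Cmat (fun i : Fin n => if i = ⟨0, hn0⟩ then (1:ℂ) else 0)) <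
    gind (fun x => ⨆ i, ‖x i‖)
      (fun x => 2 * Real.sqrt (∑ i, ‖x i‖ ^ 2))
      (Cmat (fun i : Fin n => if i = ⟨0, hn0⟩ then (1:ℂ) else 0)) := by
  have : Nonempty (Fin n) := ⟨⟨0, hn0⟩⟩
  set A₀ := Cmat (fun i : Fin n => if i = ⟨0, hn0⟩ then (1:ℂ) else 0) with hA₀
  simp only [gind]
  have hupper : sSup {r : ℝ | ∃ x : Fin n → ℂ, Real.sqrt (∑ i, ‖x i‖ ^ 2) = 1 ∧
      r = 2 * Real.sqrt (∑ i, ‖(A₀.mulVec x) i‖ ^ 2)} ≤ 2 * Real.sqrt n := by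
    refine csSup_le ⟨_, (fun i : Fin n => if i = ⟨0, hn0⟩ then (1:ℂ) else 0), l2_e0 hn0, rfl⟩ ?_
    rintro r ⟨x, hx, rfl⟩
    rw [hA₀, l2_mulVec_Cmat hn0]
    have hsum : (∑ i, ‖x i‖ ^ 2) = 1 := Real.sqrt_eq_one.mp hx
    have h2 : ‖∑ j, x j‖ ≤ ∑ j, ‖x j‖ := norm_sum_le _ _
    have h3 : (∑ j, ‖x j‖) ≤ Real.sqrt n := by
      rw [Real.le_sqrt (by positivity) (by positivity)]
      calc (∑ j, ‖x j‖) ^ 2 ≤ (Finset.univ.card : ℝ) * ∑ j, ‖x j‖ ^ 2 :=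
            sq_sum_le_card_mul_sum_sq
        _ = n := by rw [hsum, Finset.card_univ, Fintype.card_fin]; ring
    linarith
  have hlower : (2 : ℝ) * n ≤ sSup {r : ℝ | ∃ x : Fin n → ℂ, (⨆ i, ‖x i‖) = 1 ∧
      r = 2 * Real.sqrt (∑ i, ‖(A₀.mulVec x) i‖ ^ 2)} := by
    have hmem : (2 : ℝ) * n ∈ {r : ℝ | ∃ x : Fin n → ℂ, (⨆ i, ‖x i‖) = 1 ∧
        r = 2 * Real.sqrt (∑ i, ‖(A₀.mulVec x) i‖ ^ 2)} := by
      refine ⟨fun _ => (1:ℂ), by simp [ciSup_const], ?_⟩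
      rw [hA₀, l2_mulVec_Cmat hn0]
      simp
    exact le_csSup (bddS hn0 A₀) hmem
  have hsqrt : Real.sqrt n < n := by
    rw [Real.sqrt_lt' (by positivity)]
    have : (2:ℝ) ≤ n := by exact_mod_cast hn
    nlinarith
  calc sSup {r : ℝ | ∃ x : Fin n → ℂ, Real.sqrt (∑ i, ‖x i‖ ^ 2) = 1 ∧
        r = 2 * Real.sqrt (∑ i, ‖(A₀.mulVec x) i‖ ^ 2)} ≤ 2 * Real.sqrt n := hupper
    _ < 2 * n := by linarith
    _ ≤ _ := hlower

end Aux

set_option maxHeartbeats 1000000 in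
set_option synthInstance.maxHeartbeats 400000 in
theorem gind_not_minimal_example (n : ℕ) (hn : 2 ≤ n) :
    (∀ A : Matrix (Fin n) (Fin n) ℂ,
        gind (fun x => Real.sqrt (∑ i, ‖x i‖ ^ 2))
          (fun x => 2 * Real.sqrt (∑ i, ‖x i‖ ^ 2)) A ≤
        gind (fun x => ⨆ i, ‖x i‖)
          (fun x => 2 * Real.sqrt (∑ i, ‖x i‖ ^ 2)) A) ∧
    (∃ A : Matrix (Fin n) (Fin n) ℂ,
        gind (fun x => Real.sqrt (∑ i, ‖x i‖ ^ 2))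
          (fun x => 2 * Real.sqrt (∑ i, ‖x i‖ ^ 2)) A <
        gind (fun x => ⨆ i, ‖x i‖)
          (fun x => 2 * Real.sqrt (∑ i, ‖x i‖ ^ 2)) A) ∧
    ¬ IsMinimalNorm (gind (fun x : Fin n → ℂ => ⨆ i, ‖x i‖)
        (fun x => 2 * Real.sqrt (∑ i, ‖x i‖ ^ 2))) := by
  
  have hn0 : 0 < n := by omega
  refine ⟨gind_le_aux hn, ⟨_, gind_lt_aux hn hn0⟩, fun hmin => ?_⟩
  set A₀ := Cmat (fun i : Fin n => if i = ⟨0, hn0⟩ then (1:ℂ) else 0) with hA₀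
  have hN' : IsNormMn (fun A : Matrix (Fin n) (Fin n) ℂ =>
      2 * ‖toEuclideanCLM (𝕜 := ℂ) A‖) := by
    refine ⟨fun A => ?_, fun c A => ?_, fun A B => ?_⟩
    · show 2 * ‖toEuclideanCLM (𝕜 := ℂ) A‖ = 0 ↔ A = 0
      constructor
      · intro h
        have h0 : ‖toEuclideanCLM (𝕜 := ℂ) A‖ = 0 := by
          have hnn : (0:ℝ) ≤ ‖toEuclideanCLM (𝕜 := ℂ) A‖ := norm_nonneg _
          linarith
        have := norm_eq_zero.mp h0
        have h2 : toEuclideanCLM (𝕜 := ℂ) A = toEuclideanCLM (𝕜 := ℂ) 0 := by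
          rw [this, map_zero]
        exact (toEuclideanCLM (𝕜 := ℂ)).injective h2
      · rintro rfl; simp
    · show 2 * ‖toEuclideanCLM (𝕜 := ℂ) (c • A)‖ = ‖c‖ * (2 * ‖toEuclideanCLM (𝕜 := ℂ) A‖)
      rw [_root_.map_smul]
      have hns : ‖c • toEuclideanCLM (𝕜 := ℂ) A‖ = ‖c‖ * ‖toEuclideanCLM (𝕜 := ℂ) A‖ :=
        norm_smul c (toEuclideanCLM (𝕜 := ℂ) A)
      rw [hns]; ring
    · show 2 * ‖toEuclideanCLM (𝕜 := ℂ) (A + B)‖ ≤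
        2 * ‖toEuclideanCLM (𝕜 := ℂ) A‖ + 2 * ‖toEuclideanCLM (𝕜 := ℂ) B‖
      have := norm_add_le (toEuclideanCLM (𝕜 := ℂ) A) (toEuclideanCLM (𝕜 := ℂ) B)
      rw [← map_add] at this
      linarith
  have hdom : ∀ A : Matrix (Fin n) (Fin n) ℂ,
      2 * ‖toEuclideanCLM (𝕜 := ℂ) A‖ ≤
        gind (fun x : Fin n → ℂ => ⨆ i, ‖x i‖)
          (fun x => 2 * Real.sqrt (∑ i, ‖x i‖ ^ 2)) A := fun A => by
    rw [← gind2_eq_opNorm hn0]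
    exact gind_le_aux hn A
  have heq := hmin _ hN' hdom A₀
  have hlt := gind_lt_aux hn hn0
  rw [← gind2_eq_opNorm hn0] at heq
  rw [heq] at hlt
  exact lt_irrefl _ hlt
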